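/- For l ∈ {1,2}: (i) for z = it with real t satisfying 0 ≤ t ≤ 1, one has |α(2)K_{l,l}(2, z)|/2 + |α(4)K_{l,l}(4, z)|/4 ≤ 2/3 if 2 ∤ D, and ≤ 1/3 if 2 | D; (ii) for every prime p ≥ 3 and every z with Re z ≥ 0, one has |α(p)K_{l,l}(p, z)|/p + |α(p²)K_{l,l}(p², z)|/p² ≤ 5/9 if p ∤ D, and ≤ 1/5 if p | D. -/

import Mathlib

noncomputable section

open Complex Finset MeasureTheory

namespace EpsteinPaper

/-- `d` is a fundamental discriminant. -/
def IsFundDisc (d : ℤ) : Prop :=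
  (d % 4 = 1 ∧ Squarefree d) ∨
  (d % 4 = 0 ∧ Squarefree (d / 4) ∧ (d / 4 % 4 = 2 ∨ d / 4 % 4 = 3))

/-- Generalized binomial coefficient `z choose k`. -/
def gchoose (z : ℂ) (k : ℕ) : ℂ := (∏ i ∈ Finset.range k, (z - (i : ℂ))) / (k.factorial : ℂ)

/-- `τ_k(m)`: the number of ordered `k`-tuples of positive integers with product `m`. -/
def tauk (k m : ℕ) : ℕ := Nat.card {f : Fin k → ℕ // ∏ i, f i = m}

/-- `τ(m)`: the number of divisors of `m`. -/
def tau (m : ℕ) : ℕ := m.divisors.card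

/-- `(m, d^∞)`: the largest divisor of `m` supported on primes dividing `d`. -/
def corad (m d : ℕ) : ℕ :=
  ∏ p ∈ m.primeFactors.filter (fun p => p ∣ d), p ^ (m.factorization p)

/-- `G_N = ∏_{p | N} (1 + p^{-3/4})²`. -/
def GNfac (N : ℕ) : ℝ := ∏ p ∈ N.primeFactors, (1 + (p : ℝ) ^ (-(3 / 4 : ℝ))) ^ 2

/-- The data of the paper: two moduli together with Dirichlet characters on them. -/
structure Ctx where
  d₁ : ℕ
  d₂ : ℕ
  χ₁ : DirichletCharacter ℂ d₁
  χ₂ : DirichletCharacter ℂ d₂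

namespace Ctx

/-- `D = d₁ d₂`. -/
def D (P : Ctx) : ℕ := P.d₁ * P.d₂

/-- Swapping the roles of the two characters. -/
def swap (P : Ctx) : Ctx := ⟨P.d₂, P.d₁, P.χ₂, P.χ₁⟩

/-- The standing hypotheses: `d₁, d₂` are positive and coprime, `-D` is a fundamental
discriminant, and `χ₁, χ₂` are real primitive Dirichlet characters. -/
def Good (P : Ctx) : Prop :=
  0 < P.d₁ ∧ 0 < P.d₂ ∧ Nat.Coprime P.d₁ P.d₂ ∧
  IsFundDisc (-(P.D : ℤ)) ∧
  P.χ₁.IsPrimitive ∧ P.χ₂.IsPrimitive ∧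
  (∀ a : ZMod P.d₁, star (P.χ₁ a) = P.χ₁ a) ∧
  (∀ a : ZMod P.d₂, star (P.χ₂ a) = P.χ₂ a)

/-- `χ_D(n) = χ_{d₁}(n) χ_{d₂}(n)` as a function on `ℕ`. -/
def chiD (P : Ctx) (n : ℕ) : ℂ := P.χ₁ (n : ZMod P.d₁) * P.χ₂ (n : ZMod P.d₂)

/-- `χ_D` as a Dirichlet character modulo `D = d₁ d₂`. -/
def chiDchar (P : Ctx) : DirichletCharacter ℂ (P.d₁ * P.d₂) :=
  (DirichletCharacter.changeLevel (dvd_mul_right P.d₁ P.d₂) P.χ₁) *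
  (DirichletCharacter.changeLevel (dvd_mul_left P.d₂ P.d₁) P.χ₂)

/-- `r(n) = Σ_{ab=n} χ_{d₁}(a) χ_{d₂}(b)`. -/
def r (P : Ctx) (n : ℕ) : ℂ :=
  ∑ p ∈ n.divisorsAntidiagonal, P.χ₁ (p.1 : ZMod P.d₁) * P.χ₂ (p.2 : ZMod P.d₂)

/-- `α` is the multiplicative function whose generating series at each prime `p` is
`((1 - χ_{d₁}(p) x) (1 - χ_{d₂}(p) x))^{1/2}` (principal binomial series); equivalently
`Σ α(ν) ν^{-s} = (L(s,χ_{d₁}) L(s,χ_{d₂}))^{-1/2}` for `Re s > 1`. -/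
def IsAlpha (P : Ctx) (α : ℕ → ℂ) : Prop :=
  α 1 = 1 ∧
  (∀ m n : ℕ, Nat.Coprime m n → α (m * n) = α m * α n) ∧
  (∀ p : ℕ, p.Prime → ∀ k : ℕ, α (p ^ k) =
    ∑ ij ∈ Finset.HasAntidiagonal.antidiagonal k,
      gchoose (1 / 2) ij.1 * (-(P.χ₁ (p : ZMod P.d₁))) ^ ij.1 *
        (gchoose (1 / 2) ij.2 * (-(P.χ₂ (p : ZMod P.d₂))) ^ ij.2))

end Ctx

/-- The smoothing weight `𝓛(ν)`. -/
def LL (X : ℝ) (ν : ℕ) : ℝ :=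
  if (ν : ℝ) < Real.sqrt X then 1
  else if (ν : ℝ) ≤ X then 2 * Real.log (X / (ν : ℝ)) / Real.log X
  else 0

/-- `β(ν) = α(ν) 𝓛(ν)`. -/
def betaf (α : ℕ → ℂ) (X : ℝ) (ν : ℕ) : ℂ := α ν * ((LL X ν : ℝ) : ℂ)

/-- The mollifier `η(s) = Σ_{ν ≤ X} β(ν) ν^{-s}`. -/
def eta (α : ℕ → ℂ) (X : ℝ) (s : ℂ) : ℂ :=
  ∑ ν ∈ Finset.Icc 1 ⌊X⌋₊, betaf α X ν * (ν : ℂ) ^ (-s)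

namespace Ctx

/-- `L(s) = L(s, χ_{d₁}) L(s, χ_{d₂})`. -/
def Lfun (P : Ctx) [NeZero P.d₁] [NeZero P.d₂] (s : ℂ) : ℂ :=
  P.χ₁.LFunction s * P.χ₂.LFunction s

/-- `F(t) = (2π/√D)^{-(1/2+it)} Γ(1/2+it) L(1/2+it) |η(1/2+it)|² e^{(π/2 - 1/T) t}`. -/
def Ffun (P : Ctx) [NeZero P.d₁] [NeZero P.d₂] (α : ℕ → ℂ) (T X : ℝ) (t : ℝ) : ℂ :=
  (((2 * Real.pi / Real.sqrt (P.D : ℝ) : ℝ)) : ℂ) ^ (-(1 / 2 + Complex.I * (t : ℂ))) *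
  Complex.Gamma (1 / 2 + Complex.I * (t : ℂ)) *
  P.Lfun (1 / 2 + Complex.I * (t : ℂ)) *
  (((‖eta α X (1 / 2 + Complex.I * (t : ℂ))‖) ^ 2 : ℝ) : ℂ) *
  ((Real.exp ((Real.pi / 2 - 1 / T) * t) : ℝ) : ℂ)

/-- `I(t, H) = ∫_t^{t+H} F(u) du`. -/
def Ifun (P : Ctx) [NeZero P.d₁] [NeZero P.d₂] (α : ℕ → ℂ) (T X t H : ℝ) : ℂ :=
  ∫ u in t..(t + H), P.Ffun α T X u

/-- The function `G(y)` (with `δ = 1/T`). -/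
def Gfun (P : Ctx) (α : ℕ → ℂ) (T X : ℝ) (y : ℝ) : ℝ :=
  (‖∑ ν₁ ∈ Finset.Icc 1 ⌊X⌋₊, ∑ ν₂ ∈ Finset.Icc 1 ⌊X⌋₊,
    betaf α X ν₁ * betaf α X ν₂ / (ν₂ : ℂ) *
    ∑' n : ℕ, P.r n *
      Complex.exp (-(((2 * Real.pi * (n : ℝ) * (ν₁ : ℝ) /
          (Real.sqrt (P.D : ℝ) * (ν₂ : ℝ)) * y : ℝ)) : ℂ) *
        (((Real.sin (1 / T) : ℝ) : ℂ) + Complex.I * ((Real.cos (1 / T) : ℝ) : ℂ)))‖) ^ 2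

/-- `J(x, θ) = ∫_x^∞ G(u) u^{-θ} du`. -/
def Jfun (P : Ctx) (α : ℕ → ℂ) (T X θ x : ℝ) : ℝ :=
  ∫ u in Set.Ioi x, P.Gfun α T X u * u ^ (-θ)

/-- The Euler-factor function `K(m, s)`. -/
def Kf (P : Ctx) (m : ℕ) (s : ℂ) : ℂ :=
  ∏ p ∈ m.primeFactors,
    ((∑' k : ℕ, (P.r (p ^ k)) ^ 2 * (p : ℂ) ^ (-(k : ℂ) * s))⁻¹ *
     (∑' k : ℕ, P.r (p ^ (m.factorization p + k)) * P.r (p ^ k) * (p : ℂ) ^ (-(k : ℂ) * s)))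

/-- `K_{l,l}(m, z)` in its "sum" form (an entire function of `z`); the case `l = 1`.  The case
`l = 2` is obtained by applying this to `P.swap`. -/
def KllS (P : Ctx) (m : ℕ) (z : ℂ) : ℂ :=
  ((corad m P.d₁ : ℕ) : ℂ) ^ (-z) *
  P.χ₁ ((corad m P.d₂ : ℕ) : ZMod P.d₁) * P.χ₂ ((corad m P.d₁ : ℕ) : ZMod P.d₂) *
  ∏ p ∈ m.primeFactors.filter (fun p => ¬ p ∣ P.D),
    (1 + P.chiD p / (p : ℂ))⁻¹ * (P.χ₁ (p : ZMod P.d₁)) ^ (m.factorization p) *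
    ((∑ j ∈ Finset.range (m.factorization p + 1), P.chiD (p ^ j) * (p : ℂ) ^ (-(j : ℂ) * z)) -
      (p : ℂ) ^ (-(z + 1)) *
        ∑ j ∈ Finset.range (m.factorization p - 1), P.chiD (p ^ j) * (p : ℂ) ^ (-(j : ℂ) * z))

/-- `K_{l,l}(m, z)` in its original "product" form; the case `l = 1`. -/
def KllP (P : Ctx) (m : ℕ) (z : ℂ) : ℂ :=
  ((corad m P.d₁ : ℕ) : ℂ) ^ (-z) *
  P.χ₁ ((corad m P.d₂ : ℕ) : ZMod P.d₁) * P.χ₂ ((corad m P.d₁ : ℕ) : ZMod P.d₂) *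
  ∏ p ∈ m.primeFactors.filter (fun p => ¬ p ∣ P.D),
    (1 - (p : ℂ) ^ (-(2 : ℂ)))⁻¹ * (1 - P.chiD p * (p : ℂ) ^ (-z))⁻¹ * (1 - P.chiD p / (p : ℂ)) *
    (P.χ₁ (p : ZMod P.d₁)) ^ (m.factorization p) *
    (1 - (p : ℂ) ^ (-(z + 1)) +
      P.chiD (p ^ (m.factorization p + 1)) *
        (p : ℂ) ^ (-((m.factorization p : ℂ) * z + 1)) * (1 - (p : ℂ) ^ (-(z - 1))))

/-- `K_{l,l}` for `l ∈ {1, 2}` (sum form). -/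
def Kl (P : Ctx) (l : Fin 2) : ℕ → ℂ → ℂ :=
  if l = 0 then P.KllS else P.swap.KllS

/-- `K_{1,2}(m₁, m₂, z)`. -/
def K12 (P : Ctx) (m₁ m₂ : ℕ) (z : ℂ) : ℂ :=
  P.χ₁ (m₁ : ZMod P.d₁) * P.χ₂ (m₂ : ZMod P.d₂) *
  (∑ q ∈ (corad (m₁ * m₂ / P.D) P.D).divisors, (q : ℂ) ^ (-z)) *
  ∏ p ∈ (m₁ * m₂).primeFactors.filter (fun p => ¬ p ∣ P.D),
    (1 + P.chiD p / (p : ℂ))⁻¹ *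
    ((∑ j ∈ Finset.range ((m₁ * m₂).factorization p + 1), (p : ℂ) ^ (-(j : ℂ) * z)) -
      P.chiD p * (p : ℂ) ^ (-(z + 1)) *
        ∑ j ∈ Finset.range ((m₁ * m₂).factorization p - 1), (p : ℂ) ^ (-(j : ℂ) * z))

end Ctx

/-- The Gauss sum `G(χ) = Σ_{x mod d} χ(x) e^{2πi x/d}`. -/
def gaussS (d : ℕ) (χ : DirichletCharacter ℂ d) : ℂ :=
  ∑ x ∈ Finset.range d, χ (x : ZMod d) * Complex.exp (2 * (Real.pi : ℂ) * Complex.I * (x : ℂ) / (d : ℂ))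

/-- `χ(x / y)`, with the convention that this is `0` when `y ∤ x`. -/
def chiAt (d : ℕ) (χ : DirichletCharacter ℂ d) (x y : ℕ) : ℂ :=
  if y ∣ x then χ ((x / y : ℕ) : ZMod d) else 0

namespace Ctx

/-- The exponential sum `ε_q(l)`. -/
def epsq (P : Ctx) (m₁ m₂ l q : ℕ) : ℂ :=
  ∑ a ∈ (Finset.range q).filter (fun a => Nat.Coprime a q),
    Complex.exp (-(2 * (Real.pi : ℂ) * Complex.I * (a : ℂ) * (l : ℂ)) / (q : ℂ)) *
    (gaussS P.d₁ P.χ₁ / ((Real.sqrt (P.d₁ : ℝ) : ℝ) : ℂ) *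
        P.χ₁ ((a * (m₁ / Nat.gcd m₁ q) : ℕ) : ZMod P.d₁) *
        chiAt P.d₂ P.χ₂ (q / Nat.gcd q m₁) P.d₁ +
      gaussS P.d₂ P.χ₂ / ((Real.sqrt (P.d₂ : ℝ) : ℝ) : ℂ) *
        P.χ₂ ((a * (m₁ / Nat.gcd m₁ q) : ℕ) : ZMod P.d₂) *
        chiAt P.d₁ P.χ₁ (q / Nat.gcd q m₁) P.d₂) *
    ((starRingEnd ℂ) (gaussS P.d₁ P.χ₁) / ((Real.sqrt (P.d₁ : ℝ) : ℝ) : ℂ) *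
        P.χ₁ ((a * (m₂ / Nat.gcd m₂ q) : ℕ) : ZMod P.d₁) *
        chiAt P.d₂ P.χ₂ (q / Nat.gcd q m₂) P.d₁ +
      (starRingEnd ℂ) (gaussS P.d₂ P.χ₂) / ((Real.sqrt (P.d₂ : ℝ) : ℝ) : ℂ) *
        P.χ₂ ((a * (m₂ / Nat.gcd m₂ q) : ℕ) : ZMod P.d₂) *
        chiAt P.d₁ P.χ₁ (q / Nat.gcd q m₂) P.d₂)

/-- The `q`-th term of the singular series `σ(l, m₁, m₂)`. -/
def sigTerm (P : Ctx) (m₁ m₂ l q : ℕ) : ℂ :=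
  P.epsq m₁ m₂ l q * ((Nat.gcd q (m₁ * m₂) : ℕ) : ℂ) /
    ((q : ℂ) ^ 2 *
      ((Real.sqrt (((P.D / Nat.gcd (q / Nat.gcd q m₁) P.D) *
          (P.D / Nat.gcd (q / Nat.gcd q m₂) P.D) : ℕ) : ℝ) : ℝ) : ℂ))

/-- The singular series `σ(l, m₁, m₂) = Σ_{q ≥ 1} ε_q(l) (q, m₁m₂) / (q² √(r₁ r₂))`. -/
def sigmaS (P : Ctx) (m₁ m₂ l : ℕ) : ℂ :=
  ∑' q : ℕ, if q = 0 then 0 else P.sigTerm m₁ m₂ l q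

/-- The shifted-convolution Dirichlet series `D_{m₁,m₂}(s, l)`. -/
def Dser (P : Ctx) (m₁ m₂ l : ℕ) (s : ℂ) : ℂ :=
  ∑' n : ℕ, (if m₂ ∣ (m₁ * n + l) then P.r ((m₁ * n + l) / m₂) else 0) * P.r n *
    ((m₁ : ℂ) * (n : ℂ) + (l : ℂ) / 2) ^ (-s)

/-- The fourfold Selberg sum `S(z)` built from `K`. -/
def Ssum (P : Ctx) (α : ℕ → ℂ) (X : ℝ) (z : ℂ) : ℂ :=
  ∑ ν₁ ∈ Finset.Icc 1 ⌊X⌋₊, ∑ ν₂ ∈ Finset.Icc 1 ⌊X⌋₊,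
    ∑ ν₃ ∈ Finset.Icc 1 ⌊X⌋₊, ∑ ν₄ ∈ Finset.Icc 1 ⌊X⌋₊,
      betaf α X ν₁ * betaf α X ν₂ * betaf α X ν₃ * betaf α X ν₄ / ((ν₂ : ℂ) * (ν₄ : ℂ)) *
      (((Nat.gcd (ν₁ * ν₄) (ν₂ * ν₃) : ℕ) : ℂ) / ((ν₁ : ℂ) * (ν₃ : ℂ))) ^ ((1 : ℂ) - z) *
      P.Kf ((ν₁ * ν₄) / Nat.gcd (ν₁ * ν₄) (ν₂ * ν₃)) (1 - z) *
      P.Kf ((ν₂ * ν₃) / Nat.gcd (ν₁ * ν₄) (ν₂ * ν₃)) (1 - z)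

/-- The fourfold Selberg sum `S_{l,l}(z)` built from `K_{l,l}`. -/
def Sll (P : Ctx) (α : ℕ → ℂ) (l : Fin 2) (X : ℝ) (z : ℂ) : ℂ :=
  ∑ ν₁ ∈ Finset.Icc 1 ⌊X⌋₊, ∑ ν₂ ∈ Finset.Icc 1 ⌊X⌋₊,
    ∑ ν₃ ∈ Finset.Icc 1 ⌊X⌋₊, ∑ ν₄ ∈ Finset.Icc 1 ⌊X⌋₊,
      betaf α X ν₁ * betaf α X ν₂ * betaf α X ν₃ * betaf α X ν₄ / ((ν₂ : ℂ) * (ν₄ : ℂ)) *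
      (((Nat.gcd (ν₁ * ν₄) (ν₂ * ν₃) : ℕ) : ℂ) / ((ν₁ : ℂ) * (ν₃ : ℂ))) ^ ((1 : ℂ) - z) *
      P.Kl l ((ν₁ * ν₄) / Nat.gcd (ν₁ * ν₄) (ν₂ * ν₃)) z *
      P.Kl l ((ν₂ * ν₃) / Nat.gcd (ν₁ * ν₄) (ν₂ * ν₃)) z

/-- The sum `S_z(X₁, γ, N)` built from `K`. -/
def SzK (P : Ctx) (α : ℕ → ℂ) (X₁ : ℝ) (γ z : ℂ) (N : ℕ) : ℂ :=
  ∑ ν ∈ (Finset.Icc 1 ⌊X₁⌋₊).filter (fun ν => Nat.Coprime ν N),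
    α ν * P.Kf ν (1 - z) * (ν : ℂ) ^ (γ - 1) * ((Real.log (X₁ / (ν : ℝ)) : ℝ) : ℂ)

/-- The sum `S_z^{(l,l)}(X₁, γ, N)` built from `K_{l,l}`. -/
def SzKll (P : Ctx) (α : ℕ → ℂ) (l : Fin 2) (X₁ : ℝ) (γ z : ℂ) (N : ℕ) : ℂ :=
  ∑ ν ∈ (Finset.Icc 1 ⌊X₁⌋₊).filter (fun ν => Nat.Coprime ν N),
    α ν * P.Kl l ν z * (ν : ℂ) ^ (γ - 1) * ((Real.log (X₁ / (ν : ℝ)) : ℝ) : ℂ)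

/-- The number of units in the ring of integers of `ℚ(√-D)`. -/
def unitsD (P : Ctx) : ℝ := if P.D = 3 then 6 else if P.D = 4 then 4 else 2

/-- `h` is the class number of `ℚ(√-D)`, characterized by Dirichlet's class number formula
`L(1, χ_D) = 2 π h / (w √D)`. -/
def IsClassNumber (P : Ctx) [NeZero (P.d₁ * P.d₂)] (h : ℕ) : Prop :=
  DirichletCharacter.LFunction P.chiDchar 1 =
    (((2 * Real.pi * (h : ℝ) / (P.unitsD * Real.sqrt (P.D : ℝ)) : ℝ)) : ℂ)

end Ctx


lemma gchoose_zero : gchoose (1/2) 0 = 1 := by simp [gchoose]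
lemma gchoose_one : gchoose (1/2) 1 = 1/2 := by simp [gchoose]
lemma gchoose_two : gchoose (1/2) 2 = -(1/8) := by
  simp [gchoose, Finset.prod_range_succ]
  norm_num

lemma alpha_p (P : Ctx) (α : ℕ → ℂ) (hα : P.IsAlpha α) (p : ℕ) (hp : p.Prime) :
    α p = -(P.χ₁ (p : ZMod P.d₁) + P.χ₂ (p : ZMod P.d₂))/2 := by
  have h := hα.2.2 p hp 1
  rw [pow_one] at h
  rw [h]
  have hset : (Finset.HasAntidiagonal.antidiagonal 1 : Finset (ℕ×ℕ)) = {(0,1),(1,0)} := rfl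
  rw [hset, Finset.sum_insert (by decide), Finset.sum_singleton, gchoose_zero, gchoose_one]
  ring

lemma alpha_p2 (P : Ctx) (α : ℕ → ℂ) (hα : P.IsAlpha α) (p : ℕ) (hp : p.Prime) :
    α (p^2) = -((P.χ₁ (p : ZMod P.d₁))^2 + (P.χ₂ (p : ZMod P.d₂))^2)/8
      + (P.χ₁ (p : ZMod P.d₁)) * (P.χ₂ (p : ZMod P.d₂))/4 := by
  have h := hα.2.2 p hp 2
  rw [h]
  have hset : (Finset.HasAntidiagonal.antidiagonal 2 : Finset (ℕ×ℕ)) = {(0,2),(1,1),(2,0)} := rfl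
  rw [hset, Finset.sum_insert (by decide), Finset.sum_insert (by decide),
    Finset.sum_singleton, gchoose_zero, gchoose_one, gchoose_two]
  ring

lemma corad_prime_pow (p : ℕ) (hp : p.Prime) (k : ℕ) (hk : k ≠ 0) (d : ℕ) :
    corad (p^k) d = if p ∣ d then p^k else 1 := by
  unfold corad
  rw [Nat.primeFactors_pow p hk, hp.primeFactors, Finset.filter_singleton]
  split
  · rw [Finset.prod_singleton, hp.factorization_pow, Finsupp.single_eq_same]
  · rfl

lemma chiD_pow (Q : Ctx) (p j : ℕ) : Q.chiD (p^j) = Q.chiD p ^ j := by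
  simp [Ctx.chiD, map_pow, mul_pow]

lemma KllS_eval_ndvd (Q : Ctx) (p : ℕ) (hp : p.Prime) (hD : ¬ p ∣ Q.D) (k : ℕ) (hk : k ≠ 0)
    (z : ℂ) :
    Q.KllS (p^k) z = (1 + Q.chiD p / (p:ℂ))⁻¹ * (Q.χ₁ ((p : ℕ) : ZMod Q.d₁))^k *
      ((∑ j ∈ Finset.range (k+1), Q.chiD p ^ j * (p:ℂ)^(-(j:ℂ)*z)) -
        (p:ℂ)^(-(z+1)) * ∑ j ∈ Finset.range (k-1), Q.chiD p ^ j * (p:ℂ)^(-(j:ℂ)*z)) := by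
  have h1 : ¬ p ∣ Q.d₁ := fun h => hD (h.trans (dvd_mul_right _ _))
  have h2 : ¬ p ∣ Q.d₂ := fun h => hD (h.trans (dvd_mul_left _ _))
  unfold Ctx.KllS
  rw [corad_prime_pow p hp k hk, corad_prime_pow p hp k hk, if_neg h1, if_neg h2,
    Nat.primeFactors_pow p hk, hp.primeFactors, Finset.filter_singleton, if_pos hD,
    Finset.prod_singleton, hp.factorization_pow, Finsupp.single_eq_same]
  simp only [Nat.cast_one, Complex.one_cpow, map_one, one_mul, chiD_pow]

lemma KllS_eval_dvd1 (Q : Ctx) (p : ℕ) (hp : p.Prime) (h1 : p ∣ Q.d₁) (h2 : ¬ p ∣ Q.d₂)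
    (k : ℕ) (hk : k ≠ 0) (z : ℂ) :
    Q.KllS (p^k) z = (((p^k : ℕ) : ℂ))^(-z) * (Q.χ₂ ((p : ℕ) : ZMod Q.d₂))^k := by
  have hD : p ∣ Q.D := h1.trans (dvd_mul_right _ _)
  unfold Ctx.KllS
  rw [corad_prime_pow p hp k hk, corad_prime_pow p hp k hk, if_pos h1, if_neg h2,
    Nat.primeFactors_pow p hk, hp.primeFactors, Finset.filter_singleton,
    if_neg (by simpa using hD)]
  simp only [Nat.cast_one, map_one, Finset.prod_empty, mul_one, Nat.cast_pow, map_pow]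

lemma KllS_eval_dvd2 (Q : Ctx) (p : ℕ) (hp : p.Prime) (h1 : ¬ p ∣ Q.d₁) (h2 : p ∣ Q.d₂)
    (k : ℕ) (hk : k ≠ 0) (z : ℂ) :
    Q.KllS (p^k) z = (Q.χ₁ ((p : ℕ) : ZMod Q.d₁))^k := by
  have hD : p ∣ Q.D := Dvd.dvd.mul_left h2 _
  unfold Ctx.KllS
  rw [corad_prime_pow p hp k hk, corad_prime_pow p hp k hk, if_neg h1, if_pos h2,
    Nat.primeFactors_pow p hk, hp.primeFactors, Finset.filter_singleton,
    if_neg (by simpa using hD)]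
  simp only [Nat.cast_one, Complex.one_cpow, map_one, Finset.prod_empty, mul_one, one_mul,
    Nat.cast_pow, map_pow]

lemma abs_nat_cpow (p : ℕ) (hp : 0 < p) (w : ℂ) : ‖((p:ℂ)^w)‖ = (p:ℝ)^w.re := by
  rw [show ((p:ℂ)) = (((p:ℝ)):ℂ) by push_cast; ring,
    Complex.norm_cpow_eq_rpow_re_of_pos (by exact_mod_cast hp)]

lemma abs_nat_cpow_le_one (p : ℕ) (hp : 1 ≤ p) (z : ℂ) (hz : 0 ≤ z.re) :
    ‖((p:ℂ)^(-z))‖ ≤ 1 := by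
  rw [abs_nat_cpow p (by omega)]
  exact Real.rpow_le_one_of_one_le_of_nonpos (by exact_mod_cast hp) (by simp [hz])


lemma real_char_val {d : ℕ} [NeZero d] (χ : DirichletCharacter ℂ d)
    (hr : ∀ a : ZMod d, star (χ a) = χ a) {n : ℕ} (h : n.Coprime d) :
    χ (n : ZMod d) = 1 ∨ χ (n : ZMod d) = -1 := by
  have hu : IsUnit ((n : ZMod d)) := (ZMod.isUnit_iff_coprime n d).mpr h
  set k := Fintype.card (ZMod d)ˣ with hkdef
  have hk : χ (n : ZMod d) ^ k = 1 := by
    obtain ⟨u, hu⟩ := hu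
    rw [← hu, ← map_pow, ← Units.val_pow_eq_pow_val, pow_card_eq_one, Units.val_one, map_one]
  have hre : ((χ (n : ZMod d)).re : ℂ) = χ (n : ZMod d) := Complex.conj_eq_iff_re.mp (hr _)
  have hkc : (((χ (n : ZMod d)).re : ℂ)) ^ k = 1 := by rw [hre]; exact hk
  have hrk : (χ (n : ZMod d)).re ^ k = 1 := by exact_mod_cast hkc
  have hk0 : k ≠ 0 := Fintype.card_ne_zero
  rcases pow_eq_one_iff_cases.mp hrk with h0 | h1 | h2
  · exact absurd h0 hk0
  · left; rw [← hre, h1, Complex.ofReal_one]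
  · right; rw [← hre, h2.1]; norm_num

/-- In the case `p ∣ D`, bounds for the two factors. -/
lemma bound_dvd (Q : Ctx) (h1 : Q.d₁ ≠ 0) (h2 : Q.d₂ ≠ 0) (hco : Nat.Coprime Q.d₁ Q.d₂)
    (hr1 : ∀ a : ZMod Q.d₁, star (Q.χ₁ a) = Q.χ₁ a)
    (hr2 : ∀ a : ZMod Q.d₂, star (Q.χ₂ a) = Q.χ₂ a)
    (p : ℕ) (hp : p.Prime) (hD : p ∣ Q.D) (z : ℂ) (hz : 0 ≤ z.re)
    (A2 A4 : ℂ)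
    (hA2 : A2 = -(Q.χ₁ ((p:ℕ) : ZMod Q.d₁) + Q.χ₂ ((p:ℕ) : ZMod Q.d₂))/2)
    (hA4 : A4 = -((Q.χ₁ ((p:ℕ) : ZMod Q.d₁))^2 + (Q.χ₂ ((p:ℕ) : ZMod Q.d₂))^2)/8
      + (Q.χ₁ ((p:ℕ) : ZMod Q.d₁)) * (Q.χ₂ ((p:ℕ) : ZMod Q.d₂))/4) :
    ‖(A2 * Q.KllS (p^1) z)‖ ≤ 1/2 ∧ ‖(A4 * Q.KllS (p^2) z)‖ ≤ 1/8 := by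
  haveI : NeZero Q.d₁ := ⟨h1⟩
  haveI : NeZero Q.d₂ := ⟨h2⟩
  have hdvd : p ∣ Q.d₁ ∨ p ∣ Q.d₂ := hp.dvd_mul.mp hD
  have hnot : ¬ (p ∣ Q.d₁ ∧ p ∣ Q.d₂) := by
    rintro ⟨hA, hB⟩
    have : p ∣ Nat.gcd Q.d₁ Q.d₂ := Nat.dvd_gcd hA hB
    rw [Nat.Coprime.gcd_eq_one hco] at this
    exact hp.one_lt.ne' (Nat.dvd_one.mp this)
  rcases hdvd with hd | hd
  · have hnd2 : ¬ p ∣ Q.d₂ := fun h => hnot ⟨hd, h⟩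
    have hz1 : Q.χ₁ ((p:ℕ) : ZMod Q.d₁) = 0 := by
      apply MulChar.map_nonunit
      rw [ZMod.isUnit_iff_coprime]
      exact fun h => (hp.coprime_iff_not_dvd.mp h) hd
    have hb : Q.χ₂ ((p:ℕ) : ZMod Q.d₂) = 1 ∨ Q.χ₂ ((p:ℕ) : ZMod Q.d₂) = -1 :=
      real_char_val Q.χ₂ hr2 (hp.coprime_iff_not_dvd.mpr hnd2)
    have habsb : ‖(Q.χ₂ ((p:ℕ) : ZMod Q.d₂))‖ = 1 := by
      rcases hb with hb | hb <;> rw [hb] <;> simp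
    constructor
    · rw [KllS_eval_dvd1 Q p hp hd hnd2 1 one_ne_zero z, hA2, hz1]
      rw [norm_mul, norm_mul, pow_one]
      have h1le : ‖(((p^1 : ℕ):ℂ)^(-z))‖ ≤ 1 := by
        rw [pow_one]; exact abs_nat_cpow_le_one p hp.one_lt.le z hz
      rw [pow_one] at h1le ⊢
      calc ‖(-(0 + Q.χ₂ ((p:ℕ) : ZMod Q.d₂))/2)‖ * (‖((p:ℂ)^(-z))‖ *
            ‖(Q.χ₂ ((p:ℕ) : ZMod Q.d₂))‖)
          = (1/2) * (‖((p:ℂ)^(-z))‖ * 1) := by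
            rw [habsb]; congr 1
            rw [show (-(0 + Q.χ₂ ((p:ℕ) : ZMod Q.d₂))/2) = -(Q.χ₂ ((p:ℕ) : ZMod Q.d₂))/2 by ring]
            rw [norm_div, norm_neg, habsb]
            simp
        _ ≤ (1/2) * 1 := by
            rw [mul_one]
            exact mul_le_mul_of_nonneg_left h1le (by norm_num)
        _ = 1/2 := by norm_num
    · rw [KllS_eval_dvd1 Q p hp hd hnd2 2 two_ne_zero z, hA4, hz1]
      rw [norm_mul, norm_mul, norm_pow, habsb]
      have h1le : ‖(((p^2 : ℕ):ℂ)^(-z))‖ ≤ 1 :=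
        abs_nat_cpow_le_one (p^2) (Nat.one_le_iff_ne_zero.mpr (pow_ne_zero 2 hp.pos.ne')) z hz
      have hA4abs : ‖(-((0:ℂ)^2 + (Q.χ₂ ((p:ℕ) : ZMod Q.d₂))^2)/8
          + 0 * Q.χ₂ ((p:ℕ) : ZMod Q.d₂)/4)‖ = 1/8 := by
        rcases hb with hb | hb <;> rw [hb] <;> norm_num
      rw [hA4abs, one_pow, mul_one]
      calc (1/8) * ‖(((p^2 : ℕ):ℂ)^(-z))‖ ≤ (1/8) * 1 :=
            mul_le_mul_of_nonneg_left h1le (by norm_num)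
        _ = 1/8 := by norm_num
  · have hnd1 : ¬ p ∣ Q.d₁ := fun h => hnot ⟨h, hd⟩
    have hz2 : Q.χ₂ ((p:ℕ) : ZMod Q.d₂) = 0 := by
      apply MulChar.map_nonunit
      rw [ZMod.isUnit_iff_coprime]
      exact fun h => (hp.coprime_iff_not_dvd.mp h) hd
    have ha : Q.χ₁ ((p:ℕ) : ZMod Q.d₁) = 1 ∨ Q.χ₁ ((p:ℕ) : ZMod Q.d₁) = -1 :=
      real_char_val Q.χ₁ hr1 (hp.coprime_iff_not_dvd.mpr hnd1)
    constructor
    · rw [KllS_eval_dvd2 Q p hp hnd1 hd 1 one_ne_zero z, hA2, hz2]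
      rcases ha with ha | ha <;> rw [ha] <;> norm_num
    · rw [KllS_eval_dvd2 Q p hp hnd1 hd 2 two_ne_zero z, hA4, hz2]
      rcases ha with ha | ha <;> rw [ha] <;> norm_num

lemma abs_add4 (a b c d : ℂ) : ‖(a - b + c - d)‖ ≤
    ‖a‖ + ‖b‖ + ‖c‖ + ‖d‖ := by
  calc ‖(a - b + c - d)‖ ≤ ‖(a - b + c)‖ + ‖d‖ := by
        simpa [sub_eq_add_neg] using norm_add_le (a - b + c) (-d)
    _ ≤ (‖(a - b)‖ + ‖c‖) + ‖d‖ := by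
        gcongr; exact norm_add_le _ _
    _ ≤ ((‖a‖ + ‖b‖) + ‖c‖) + ‖d‖ := by
        gcongr
        simpa [sub_eq_add_neg] using norm_add_le a (-b)
    _ = _ := by ring

lemma bound_ndvd_plus (Q : Ctx) (p : ℕ) (hp : p.Prime) (hD : ¬ p ∣ Q.D) (z : ℂ) (hz : 0 ≤ z.re)
    (he : Q.chiD p = 1) :
    ‖(Q.KllS (p^1) z)‖ ≤
      (1 + 1/(p:ℝ))⁻¹ * ‖(Q.χ₁ ((p:ℕ) : ZMod Q.d₁))‖ * 2 := by
  rw [KllS_eval_ndvd Q p hp hD 1 one_ne_zero z]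
  simp only [Finset.sum_range_succ, Finset.sum_range_zero, pow_zero, pow_one, he,
    Nat.cast_zero, neg_zero, zero_mul, Complex.cpow_zero, mul_one, one_mul, Nat.cast_one,
    neg_mul, zero_add, mul_zero, sub_zero, Nat.sub_self, Finset.range_zero, Finset.sum_empty]
  rw [norm_mul, norm_mul]
  have hcoef : ‖((1 + 1/(p:ℂ))⁻¹)‖ = (1 + 1/(p:ℝ))⁻¹ := by
    rw [show (1:ℂ) + 1/(p:ℂ) = (((1 + 1/(p:ℝ)) : ℝ) : ℂ) by push_cast; ring, norm_inv,
      Complex.norm_real, Real.norm_eq_abs, abs_of_pos (by positivity)]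
  have h2 : ‖(1 + (p:ℂ)^(-z))‖ ≤ 2 := by
    calc ‖(1 + (p:ℂ)^(-z))‖ ≤ ‖1‖ + ‖((p:ℂ)^(-z))‖ :=
          norm_add_le _ _
      _ ≤ 1 + 1 := by
          simp only [norm_one]
          gcongr
          exact abs_nat_cpow_le_one p hp.one_lt.le z hz
      _ = 2 := by norm_num
  rw [hcoef]
  exact mul_le_mul_of_nonneg_left h2 (by positivity)

lemma bound_ndvd_minus (Q : Ctx) (p : ℕ) (hp : p.Prime) (hD : ¬ p ∣ Q.D) (z : ℂ) (hz : 0 ≤ z.re)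
    (he : Q.chiD p = -1) (hs : ‖(Q.χ₁ ((p:ℕ) : ZMod Q.d₁))‖ = 1) :
    ‖(Q.KllS (p^2) z)‖ ≤ (1 - 1/(p:ℝ))⁻¹ * (3 + 1/(p:ℝ)) := by
  have hp1 : (1:ℝ) < p := by exact_mod_cast hp.one_lt
  rw [KllS_eval_ndvd Q p hp hD 2 two_ne_zero z]
  simp only [Finset.sum_range_succ, Finset.sum_range_zero, pow_zero, pow_one, he,
    Nat.cast_zero, neg_zero, zero_mul, Complex.cpow_zero, mul_one, one_mul, Nat.cast_one,
    Nat.cast_ofNat, neg_mul, zero_add, mul_zero, sub_zero, neg_neg, neg_one_sq]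
  rw [norm_mul, norm_mul, norm_pow, hs, one_pow, mul_one]
  have hcoef : ‖((1 + (-1)/(p:ℂ))⁻¹)‖ = (1 - 1/(p:ℝ))⁻¹ := by
    rw [show (1:ℂ) + (-1)/(p:ℂ) = (((1 - 1/(p:ℝ)) : ℝ) : ℂ) by push_cast; ring, norm_inv,
      Complex.norm_real, Real.norm_eq_abs, abs_of_pos (by simp only [sub_pos]; rw [div_lt_one (by linarith)]; linarith)]
  rw [hcoef]
  gcongr
  · rw [inv_nonneg]
    have : 1/(p:ℝ) ≤ 1 := by rw [div_le_one (by linarith)]; linarith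
    linarith
  calc ‖(1 + -(p:ℂ)^(-z) + (p:ℂ)^(-(2*z)) - (p:ℂ)^(-(z+1)))‖
      ≤ ‖(1 + -(p:ℂ)^(-z) + (p:ℂ)^(-(2*z)))‖ + ‖((p:ℂ)^(-(z+1)))‖ := by
        simpa [sub_eq_add_neg] using norm_add_le (1 + -(p:ℂ)^(-z) + (p:ℂ)^(-(2*z))) (-((p:ℂ)^(-(z+1))))
    _ ≤ (‖(1 + -(p:ℂ)^(-z))‖ + ‖((p:ℂ)^(-(2*z)))‖) + ‖((p:ℂ)^(-(z+1)))‖ := by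
        gcongr; exact norm_add_le _ _
    _ ≤ ((‖(1:ℂ)‖ + ‖((p:ℂ)^(-z))‖) + ‖((p:ℂ)^(-(2*z)))‖) + ‖((p:ℂ)^(-(z+1)))‖ := by
        gcongr
        simpa using norm_add_le (1:ℂ) (-((p:ℂ)^(-z)))
    _ ≤ ((1 + 1) + 1) + 1/(p:ℝ) := by
        gcongr
        · simp
        · exact abs_nat_cpow_le_one p hp.one_lt.le z hz
        · exact abs_nat_cpow_le_one p hp.one_lt.le (2*z) (by simp; linarith)
        · rw [abs_nat_cpow p hp.pos]
          have : ((-(z+1)).re) ≤ -1 := by simp; linarith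
          calc (p:ℝ) ^ ((-(z+1)).re) ≤ (p:ℝ) ^ (-1 : ℝ) :=
                Real.rpow_le_rpow_of_exponent_le (by linarith) this
            _ = 1/(p:ℝ) := by rw [Real.rpow_neg_one]; ring
    _ = 3 + 1/(p:ℝ) := by ring

lemma key_trig_aux (θ : ℝ) (hθ0 : 0 ≤ θ) (hθpi : θ ≤ Real.pi / 3) :
    ‖(1 + -(Complex.exp (-(θ:ℂ)*Complex.I))
      + (Complex.exp (-(θ:ℂ)*Complex.I))^2 - (Complex.exp (-(θ:ℂ)*Complex.I))/2)‖ ≤ 1/2 := by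
  have hEinv : Complex.exp (-(θ:ℂ)*Complex.I) * Complex.exp ((θ:ℂ)*Complex.I) = 1 := by
    rw [← Complex.exp_add, show -(θ:ℂ)*Complex.I + (θ:ℂ)*Complex.I = 0 by ring,
      Complex.exp_zero]
  have hcos2 : (2:ℂ) * Complex.cos (θ:ℂ) =
      Complex.exp ((θ:ℂ)*Complex.I) + Complex.exp (-(θ:ℂ)*Complex.I) := by
    rw [Complex.cos]
    ring_nf
  have hkey : 1 + -(Complex.exp (-(θ:ℂ)*Complex.I)) + (Complex.exp (-(θ:ℂ)*Complex.I))^2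
      - (Complex.exp (-(θ:ℂ)*Complex.I))/2
      = Complex.exp (-(θ:ℂ)*Complex.I) * (((2*Real.cos θ - 3/2 : ℝ)):ℂ) := by
    have h1 : Complex.exp (-(θ:ℂ)*Complex.I) * ((2:ℂ) * Complex.cos (θ:ℂ)) =
        1 + (Complex.exp (-(θ:ℂ)*Complex.I))^2 := by
      rw [hcos2, mul_add, hEinv, sq, ← Complex.exp_add]
    have hc : ((2*Real.cos θ - 3/2 : ℝ) : ℂ) = 2 * Complex.cos (θ:ℂ) - 3/2 := by
      push_cast [Complex.ofReal_cos]
      ring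
    rw [hc, show Complex.exp (-(θ:ℂ)*Complex.I) * (2 * Complex.cos (θ:ℂ) - 3/2)
      = Complex.exp (-(θ:ℂ)*Complex.I) * (2 * Complex.cos (θ:ℂ))
        - (3/2)*Complex.exp (-(θ:ℂ)*Complex.I) by ring, h1]
    ring
  rw [hkey, norm_mul, Complex.norm_exp]
  have hre : (-(θ:ℂ)*Complex.I).re = 0 := by simp
  rw [hre, Real.exp_zero, one_mul, Complex.norm_real, Real.norm_eq_abs]
  have hpi : Real.pi / 3 ≤ Real.pi := by linarith [Real.pi_gt_three]
  have hcosge : (1/2 : ℝ) ≤ Real.cos θ := by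
    have := Real.cos_le_cos_of_nonneg_of_le_pi hθ0 hpi hθpi
    rwa [Real.cos_pi_div_three] at this
  have hcosle := Real.cos_le_one θ
  rw [abs_le]
  constructor <;> linarith

lemma key_trig (t : ℝ) (ht0 : 0 ≤ t) (ht1 : t ≤ 1) :
    ‖(1 + -(2:ℂ)^(-(Complex.I*(t:ℂ))) + (2:ℂ)^(-(2*(Complex.I*(t:ℂ))))
      - (2:ℂ)^(-((Complex.I*(t:ℂ))+1)))‖ ≤ 1/2 := by
  have hlog2 : Complex.log 2 = ((Real.log 2 : ℝ) : ℂ) := by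
    rw [show (2:ℂ) = (((2:ℝ)):ℂ) by norm_num, ← Complex.ofReal_log (by norm_num)]
  have hw : (2:ℂ)^(-(Complex.I*(t:ℂ))) = Complex.exp (-((t * Real.log 2 : ℝ):ℂ)*Complex.I) := by
    rw [Complex.cpow_def_of_ne_zero two_ne_zero, hlog2]
    congr 1
    push_cast
    ring
  have hw2 : (2:ℂ)^(-(2*(Complex.I*(t:ℂ)))) =
      (Complex.exp (-((t * Real.log 2 : ℝ):ℂ)*Complex.I))^2 := by
    rw [Complex.cpow_def_of_ne_zero two_ne_zero, hlog2, sq, ← Complex.exp_add]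
    congr 1
    push_cast
    ring
  have hw1 : (2:ℂ)^(-((Complex.I*(t:ℂ))+1)) =
      (Complex.exp (-((t * Real.log 2 : ℝ):ℂ)*Complex.I))/2 := by
    rw [show -((Complex.I*(t:ℂ))+1) = -(Complex.I*(t:ℂ)) + (-1) by ring,
      Complex.cpow_add _ _ two_ne_zero, hw, Complex.cpow_neg, Complex.cpow_one]
    ring
  rw [hw, hw2, hw1]
  have hθ0 : 0 ≤ t * Real.log 2 := mul_nonneg ht0 (Real.log_nonneg one_le_two)
  have hlog1 : Real.log 2 ≤ 1 := by
    have := Real.log_le_sub_one_of_pos (show (0:ℝ) < 2 by norm_num)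
    linarith
  have hθpi : t * Real.log 2 ≤ Real.pi / 3 := by
    nlinarith [Real.pi_gt_three, Real.log_nonneg (show (1:ℝ) ≤ 2 by norm_num)]
  exact key_trig_aux (t * Real.log 2) hθ0 hθpi

lemma bound_ndvd_odd (Q : Ctx) (h1 : Q.d₁ ≠ 0) (h2 : Q.d₂ ≠ 0)
    (hr1 : ∀ a : ZMod Q.d₁, star (Q.χ₁ a) = Q.χ₁ a)
    (hr2 : ∀ a : ZMod Q.d₂, star (Q.χ₂ a) = Q.χ₂ a)
    (p : ℕ) (hp : p.Prime) (hp3 : 3 ≤ p) (hD : ¬ p ∣ Q.D) (z : ℂ) (hz : 0 ≤ z.re)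
    (A2 A4 : ℂ)
    (hA2 : A2 = -(Q.χ₁ ((p:ℕ) : ZMod Q.d₁) + Q.χ₂ ((p:ℕ) : ZMod Q.d₂))/2)
    (hA4 : A4 = -((Q.χ₁ ((p:ℕ) : ZMod Q.d₁))^2 + (Q.χ₂ ((p:ℕ) : ZMod Q.d₂))^2)/8
      + (Q.χ₁ ((p:ℕ) : ZMod Q.d₁)) * (Q.χ₂ ((p:ℕ) : ZMod Q.d₂))/4) :
    ‖(A2 * Q.KllS (p^1) z)‖ / (p:ℝ) +
      ‖(A4 * Q.KllS (p^2) z)‖ / (p:ℝ)^2 ≤ 5/9 := by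
  haveI : NeZero Q.d₁ := ⟨h1⟩
  haveI : NeZero Q.d₂ := ⟨h2⟩
  have hnd1 : ¬ p ∣ Q.d₁ := fun h => hD (h.trans (dvd_mul_right _ _))
  have hnd2 : ¬ p ∣ Q.d₂ := fun h => hD (h.trans (dvd_mul_left _ _))
  have ha : Q.χ₁ ((p:ℕ) : ZMod Q.d₁) = 1 ∨ Q.χ₁ ((p:ℕ) : ZMod Q.d₁) = -1 :=
    real_char_val Q.χ₁ hr1 (hp.coprime_iff_not_dvd.mpr hnd1)
  have hb : Q.χ₂ ((p:ℕ) : ZMod Q.d₂) = 1 ∨ Q.χ₂ ((p:ℕ) : ZMod Q.d₂) = -1 :=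
    real_char_val Q.χ₂ hr2 (hp.coprime_iff_not_dvd.mpr hnd2)
  have hchiD : Q.chiD p = Q.χ₁ ((p:ℕ) : ZMod Q.d₁) * Q.χ₂ ((p:ℕ) : ZMod Q.d₂) := rfl
  have hp3' : (3:ℝ) ≤ (p:ℝ) := by exact_mod_cast hp3
  have hp0 : (0:ℝ) < (p:ℝ) := by linarith
  -- the two helper bounds, depending on the sign of chiD p
  have case_plus : ∀ _he : Q.chiD p = 1, ‖A2‖ = 1 → A4 = 0 → _root_.True → 
      ‖(A2 * Q.KllS (p^1) z)‖ / (p:ℝ) +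
        ‖(A4 * Q.KllS (p^2) z)‖ / (p:ℝ)^2 ≤ 5/9 := by
    intro he habs2 h40 _
    have hs : ‖(Q.χ₁ ((p:ℕ) : ZMod Q.d₁))‖ = 1 := by
      rcases ha with h | h <;> rw [h] <;> simp
    have hK := bound_ndvd_plus Q p hp hD z hz he
    rw [hs, mul_one] at hK
    rw [h40, zero_mul, norm_zero, zero_div, add_zero, norm_mul, habs2, one_mul]
    have hfrac : (1 + 1/(p:ℝ))⁻¹ * 2 / (p:ℝ) = 2/((p:ℝ)+1) := by
      field_simp
    calc ‖(Q.KllS (p^1) z)‖ / (p:ℝ) ≤ ((1 + 1/(p:ℝ))⁻¹ * 2) / (p:ℝ) := by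
          gcongr
      _ = 2/((p:ℝ)+1) := hfrac
      _ ≤ 5/9 := by
          rw [div_le_div_iff₀ (by linarith) (by norm_num)]
          linarith
  have case_minus : ∀ _he : Q.chiD p = -1, A2 = 0 → ‖A4‖ = 1/2 →
      ‖(A2 * Q.KllS (p^1) z)‖ / (p:ℝ) +
        ‖(A4 * Q.KllS (p^2) z)‖ / (p:ℝ)^2 ≤ 5/9 := by
    intro he h20 habs4
    have hs : ‖(Q.χ₁ ((p:ℕ) : ZMod Q.d₁))‖ = 1 := by
      rcases ha with h | h <;> rw [h] <;> simp
    have hK := bound_ndvd_minus Q p hp hD z hz he hs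
    rw [h20, zero_mul, norm_zero, zero_div, zero_add, norm_mul, habs4]
    have h5 : (1 - 1/(p:ℝ))⁻¹ * (3 + 1/(p:ℝ)) ≤ 5 := by
      have hpm : (0:ℝ) < (p:ℝ) - 1 := by linarith
      have hfrac : (1 - 1/(p:ℝ))⁻¹ * (3 + 1/(p:ℝ)) = (3*(p:ℝ)+1)/((p:ℝ)-1) := by
        have hp0' : (p:ℝ) ≠ 0 := by linarith
        have hpm' : (p:ℝ) - 1 ≠ 0 := by linarith
        field_simp
      rw [hfrac, div_le_iff₀ hpm]
      linarith
    have hK5 : ‖(Q.KllS (p^2) z)‖ ≤ 5 := le_trans hK h5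
    have hp2 : (9:ℝ) ≤ (p:ℝ)^2 := by nlinarith
    calc 1/2 * ‖(Q.KllS (p^2) z)‖ / (p:ℝ)^2 ≤ (1/2 * 5) / 9 := by
          apply div_le_div₀ (by norm_num) _ (by norm_num) hp2
          nlinarith [norm_nonneg (Q.KllS (p^2) z)]
      _ ≤ 5/9 := by norm_num
  rcases ha with ha' | ha' <;> rcases hb with hb' | hb'
  · exact case_plus (by rw [hchiD, ha', hb']; ring) (by rw [hA2, ha', hb']; norm_num)
      (by rw [hA4, ha', hb']; norm_num) trivial
  · apply case_minus (by rw [hchiD, ha', hb']; ring) (by rw [hA2, ha', hb']; norm_num)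
    rw [hA4, ha', hb']
    norm_num
  · apply case_minus (by rw [hchiD, ha', hb']; ring) (by rw [hA2, ha', hb']; norm_num)
    rw [hA4, ha', hb']
    norm_num
  · exact case_plus (by rw [hchiD, ha', hb']; ring) (by rw [hA2, ha', hb']; norm_num)
      (by rw [hA4, ha', hb']; norm_num) trivial

lemma bound_ndvd_minus_two (Q : Ctx) (hD : ¬ 2 ∣ Q.D) (t : ℝ) (ht0 : 0 ≤ t) (ht1 : t ≤ 1)
    (he : Q.chiD 2 = -1) (hs : ‖(Q.χ₁ ((2:ℕ) : ZMod Q.d₁))‖ = 1) :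
    ‖(Q.KllS (2^2) (Complex.I*(t:ℂ)))‖ ≤ 1 := by
  rw [KllS_eval_ndvd Q 2 Nat.prime_two hD 2 two_ne_zero _]
  simp only [Finset.sum_range_succ, Finset.sum_range_zero, pow_zero, pow_one, he,
    Nat.cast_zero, neg_zero, zero_mul, Complex.cpow_zero, mul_one, one_mul, Nat.cast_one,
    Nat.cast_ofNat, neg_mul, zero_add, mul_zero, sub_zero, neg_neg, neg_one_sq]
  have hs' : ‖(Q.χ₁ (2 : ZMod Q.d₁))‖ = 1 := by rwa [Nat.cast_ofNat] at hs
  rw [norm_mul, norm_mul, norm_pow, hs', one_pow, mul_one]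
  have hcoef : ‖((1 + (-1)/(2:ℂ))⁻¹)‖ = 2 := by
    rw [show (1:ℂ) + (-1)/(2:ℂ) = (((1/2 : ℝ)) : ℂ) by norm_num, norm_inv, Complex.norm_real, Real.norm_eq_abs,
      show |(1/2 : ℝ)| = 1/2 from abs_of_pos (by norm_num)]
    norm_num
  rw [hcoef]
  have hf := key_trig t ht0 ht1
  linarith

lemma bound_two_ndvd (Q : Ctx) (h1 : Q.d₁ ≠ 0) (h2 : Q.d₂ ≠ 0)
    (hr1 : ∀ a : ZMod Q.d₁, star (Q.χ₁ a) = Q.χ₁ a)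
    (hr2 : ∀ a : ZMod Q.d₂, star (Q.χ₂ a) = Q.χ₂ a)
    (hD : ¬ 2 ∣ Q.D) (t : ℝ) (ht0 : 0 ≤ t) (ht1 : t ≤ 1)
    (A2 A4 : ℂ)
    (hA2 : A2 = -(Q.χ₁ ((2:ℕ) : ZMod Q.d₁) + Q.χ₂ ((2:ℕ) : ZMod Q.d₂))/2)
    (hA4 : A4 = -((Q.χ₁ ((2:ℕ) : ZMod Q.d₁))^2 + (Q.χ₂ ((2:ℕ) : ZMod Q.d₂))^2)/8
      + (Q.χ₁ ((2:ℕ) : ZMod Q.d₁)) * (Q.χ₂ ((2:ℕ) : ZMod Q.d₂))/4) :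
    ‖(A2 * Q.KllS (2^1) (Complex.I*(t:ℂ)))‖/2 +
      ‖(A4 * Q.KllS (2^2) (Complex.I*(t:ℂ)))‖/4 ≤ 2/3 := by
  haveI : NeZero Q.d₁ := ⟨h1⟩
  haveI : NeZero Q.d₂ := ⟨h2⟩
  set z : ℂ := Complex.I*(t:ℂ) with hzdef
  have hz : 0 ≤ z.re := by rw [hzdef]; simp
  have hnd1 : ¬ (2:ℕ) ∣ Q.d₁ := fun h => hD (h.trans (dvd_mul_right _ _))
  have hnd2 : ¬ (2:ℕ) ∣ Q.d₂ := fun h => hD (h.trans (dvd_mul_left _ _))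
  have ha : Q.χ₁ ((2:ℕ) : ZMod Q.d₁) = 1 ∨ Q.χ₁ ((2:ℕ) : ZMod Q.d₁) = -1 :=
    real_char_val Q.χ₁ hr1 (Nat.prime_two.coprime_iff_not_dvd.mpr hnd1)
  have hb : Q.χ₂ ((2:ℕ) : ZMod Q.d₂) = 1 ∨ Q.χ₂ ((2:ℕ) : ZMod Q.d₂) = -1 :=
    real_char_val Q.χ₂ hr2 (Nat.prime_two.coprime_iff_not_dvd.mpr hnd2)
  have hchiD : Q.chiD 2 = Q.χ₁ ((2:ℕ) : ZMod Q.d₁) * Q.χ₂ ((2:ℕ) : ZMod Q.d₂) := rfl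
  have hs : ‖(Q.χ₁ ((2:ℕ) : ZMod Q.d₁))‖ = 1 := by
    rcases ha with h | h <;> rw [h] <;> simp
  have case_plus : Q.chiD 2 = 1 → ‖A2‖ = 1 → A4 = 0 →
      ‖(A2 * Q.KllS (2^1) z)‖/2 + ‖(A4 * Q.KllS (2^2) z)‖/4 ≤ 2/3 := by
    intro he habs2 h40
    have hK := bound_ndvd_plus Q 2 Nat.prime_two hD z hz he
    rw [hs, mul_one] at hK
    rw [h40, zero_mul, norm_zero, zero_div, add_zero, norm_mul, habs2, one_mul]
    have h43 : (1 + 1/((2:ℕ):ℝ))⁻¹ * 2 = 4/3 := by norm_num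
    rw [h43] at hK
    linarith
  have case_minus : Q.chiD 2 = -1 → A2 = 0 → ‖A4‖ = 1/2 →
      ‖(A2 * Q.KllS (2^1) z)‖/2 + ‖(A4 * Q.KllS (2^2) z)‖/4 ≤ 2/3 := by
    intro he h20 habs4
    have hK := bound_ndvd_minus_two Q hD t ht0 ht1 he hs
    rw [h20, zero_mul, norm_zero, zero_div, zero_add, norm_mul, habs4]
    rw [← hzdef] at hK
    calc 1/2 * ‖(Q.KllS (2^2) z)‖ / 4 ≤ 1/2 * 1 / 4 := by gcongr
      _ ≤ 2/3 := by norm_num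
  rcases ha with ha' | ha' <;> rcases hb with hb' | hb'
  · exact case_plus (by rw [hchiD, ha', hb']; ring) (by rw [hA2, ha', hb']; norm_num)
      (by rw [hA4, ha', hb']; norm_num)
  · apply case_minus (by rw [hchiD, ha', hb']; ring) (by rw [hA2, ha', hb']; norm_num)
    rw [hA4, ha', hb']
    norm_num
  · apply case_minus (by rw [hchiD, ha', hb']; ring) (by rw [hA2, ha', hb']; norm_num)
    rw [hA4, ha', hb']
    norm_num
  · exact case_plus (by rw [hchiD, ha', hb']; ring) (by rw [hA2, ha', hb']; norm_num)
      (by rw [hA4, ha', hb']; norm_num)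

lemma fin2_cases (l : Fin 2) : l = 0 ∨ l = 1 := by
  rcases l with ⟨v, hv⟩
  interval_cases v
  · exact Or.inl rfl
  · exact Or.inr rfl


theorem statement_10 (P : Ctx) (hP : P.Good) (α : ℕ → ℂ) (hα : P.IsAlpha α) :
    (∀ l : Fin 2, ∀ t : ℝ, 0 ≤ t → t ≤ 1 →
      (¬ 2 ∣ P.D →
        ‖α 2 * P.Kl l 2 (Complex.I * (t : ℂ))‖ / 2 +
          ‖α 4 * P.Kl l 4 (Complex.I * (t : ℂ))‖ / 4 ≤ 2 / 3) ∧
      (2 ∣ P.D →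
        ‖α 2 * P.Kl l 2 (Complex.I * (t : ℂ))‖ / 2 +
          ‖α 4 * P.Kl l 4 (Complex.I * (t : ℂ))‖ / 4 ≤ 1 / 3)) ∧
    (∀ l : Fin 2, ∀ p : ℕ, p.Prime → 3 ≤ p → ∀ z : ℂ, 0 ≤ z.re →
      (¬ p ∣ P.D →
        ‖α p * P.Kl l p z‖ / (p : ℝ) +
          ‖α (p ^ 2) * P.Kl l (p ^ 2) z‖ / (p : ℝ) ^ 2 ≤ 5 / 9) ∧
      (p ∣ P.D →
        ‖α p * P.Kl l p z‖ / (p : ℝ) +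
          ‖α (p ^ 2) * P.Kl l (p ^ 2) z‖ / (p : ℝ) ^ 2 ≤ 1 / 5)) := by
  obtain ⟨hd1, hd2, hco, _hf, _hq1, _hq2, hr1, hr2⟩ := hP
  have hd1' : P.d₁ ≠ 0 := hd1.ne'
  have hd2' : P.d₂ ≠ 0 := hd2.ne'
  have hs1' : P.swap.d₁ ≠ 0 := hd2'
  have hs2' : P.swap.d₂ ≠ 0 := hd1'
  have hsr1 : ∀ a : ZMod P.swap.d₁, star (P.swap.χ₁ a) = P.swap.χ₁ a := hr2
  have hsr2 : ∀ a : ZMod P.swap.d₂, star (P.swap.χ₂ a) = P.swap.χ₂ a := hr1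
  have hscop : Nat.Coprime P.swap.d₁ P.swap.d₂ := Nat.Coprime.symm hco
  have hsD : P.swap.D = P.D := Nat.mul_comm _ _
  have hKl0 : P.Kl 0 = P.KllS := by simp [Ctx.Kl]
  have hKl1 : P.Kl 1 = P.swap.KllS := by simp [Ctx.Kl]
  refine ⟨?_, ?_⟩
  · intro l t ht0 ht1
    have hz : 0 ≤ (Complex.I*(t:ℂ)).re := by simp
    have hA2 := alpha_p P α hα 2 Nat.prime_two
    have hA4 : α 4 = -((P.χ₁ ((2:ℕ) : ZMod P.d₁))^2 + (P.χ₂ ((2:ℕ) : ZMod P.d₂))^2)/8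
        + (P.χ₁ ((2:ℕ) : ZMod P.d₁)) * (P.χ₂ ((2:ℕ) : ZMod P.d₂))/4 := by
      rw [show (4:ℕ) = 2^2 by norm_num]
      exact alpha_p2 P α hα 2 Nat.prime_two
    have hA2s : α 2 = -(P.swap.χ₁ ((2:ℕ) : ZMod P.swap.d₁)
        + P.swap.χ₂ ((2:ℕ) : ZMod P.swap.d₂))/2 := by
      rw [hA2]
      show -(P.χ₁ ((2:ℕ) : ZMod P.d₁) + P.χ₂ ((2:ℕ) : ZMod P.d₂))/2
        = -(P.χ₂ ((2:ℕ) : ZMod P.d₂) + P.χ₁ ((2:ℕ) : ZMod P.d₁))/2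
      ring
    have hA4s : α 4 = -((P.swap.χ₁ ((2:ℕ) : ZMod P.swap.d₁))^2
        + (P.swap.χ₂ ((2:ℕ) : ZMod P.swap.d₂))^2)/8
        + (P.swap.χ₁ ((2:ℕ) : ZMod P.swap.d₁)) * (P.swap.χ₂ ((2:ℕ) : ZMod P.swap.d₂))/4 := by
      rw [hA4]
      show -((P.χ₁ ((2:ℕ) : ZMod P.d₁))^2 + (P.χ₂ ((2:ℕ) : ZMod P.d₂))^2)/8
          + (P.χ₁ ((2:ℕ) : ZMod P.d₁)) * (P.χ₂ ((2:ℕ) : ZMod P.d₂))/4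
        = -((P.χ₂ ((2:ℕ) : ZMod P.d₂))^2 + (P.χ₁ ((2:ℕ) : ZMod P.d₁))^2)/8
          + (P.χ₂ ((2:ℕ) : ZMod P.d₂)) * (P.χ₁ ((2:ℕ) : ZMod P.d₁))/4
      ring
    rcases fin2_cases l with rfl | rfl
    · constructor
      · intro hD
        have hB := bound_two_ndvd P hd1' hd2' hr1 hr2 hD t ht0 ht1 (α 2) (α 4) hA2 hA4
        rw [pow_one] at hB
        rw [hKl0, show (4:ℕ) = 2^2 from by norm_num]
        exact hB
      · intro hD
        obtain ⟨hB2, hB4⟩ := bound_dvd P hd1' hd2' hco hr1 hr2 2 Nat.prime_two hD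
          (Complex.I*(t:ℂ)) hz (α 2) (α 4) hA2 hA4
        rw [pow_one] at hB2
        rw [hKl0, show (4:ℕ) = 2^2 from by norm_num]
        have n2 := norm_nonneg (α 2 * P.KllS 2 (Complex.I*(t:ℂ)))
        have n4 := norm_nonneg (α (2^2) * P.KllS (2^2) (Complex.I*(t:ℂ)))
        linarith
    · constructor
      · intro hD
        have hDs : ¬ 2 ∣ P.swap.D := by rwa [hsD]
        have hB := bound_two_ndvd P.swap hs1' hs2' hsr1 hsr2 hDs t ht0 ht1 (α 2) (α 4) hA2s hA4s
        rw [pow_one] at hB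
        rw [hKl1, show (4:ℕ) = 2^2 from by norm_num]
        exact hB
      · intro hD
        have hDs : (2:ℕ) ∣ P.swap.D := by rwa [hsD]
        obtain ⟨hB2, hB4⟩ := bound_dvd P.swap hs1' hs2' hscop hsr1 hsr2 2 Nat.prime_two hDs
          (Complex.I*(t:ℂ)) hz (α 2) (α 4) hA2s hA4s
        rw [pow_one] at hB2
        rw [hKl1, show (4:ℕ) = 2^2 from by norm_num]
        have n2 := norm_nonneg (α 2 * P.swap.KllS 2 (Complex.I*(t:ℂ)))
        have n4 := norm_nonneg (α (2^2) * P.swap.KllS (2^2) (Complex.I*(t:ℂ)))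
        linarith
  · intro l p hp hp3 z hz
    have hp3' : (3:ℝ) ≤ (p:ℝ) := by exact_mod_cast hp3
    have h9 : (9:ℝ) ≤ (p:ℝ)^2 := by nlinarith
    have hA2 := alpha_p P α hα p hp
    have hA4 := alpha_p2 P α hα p hp
    have hA2s : α p = -(P.swap.χ₁ ((p:ℕ) : ZMod P.swap.d₁)
        + P.swap.χ₂ ((p:ℕ) : ZMod P.swap.d₂))/2 := by
      rw [hA2]
      show -(P.χ₁ ((p:ℕ) : ZMod P.d₁) + P.χ₂ ((p:ℕ) : ZMod P.d₂))/2
        = -(P.χ₂ ((p:ℕ) : ZMod P.d₂) + P.χ₁ ((p:ℕ) : ZMod P.d₁))/2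
      ring
    have hA4s : α (p^2) = -((P.swap.χ₁ ((p:ℕ) : ZMod P.swap.d₁))^2
        + (P.swap.χ₂ ((p:ℕ) : ZMod P.swap.d₂))^2)/8
        + (P.swap.χ₁ ((p:ℕ) : ZMod P.swap.d₁)) * (P.swap.χ₂ ((p:ℕ) : ZMod P.swap.d₂))/4 := by
      rw [hA4]
      show -((P.χ₁ ((p:ℕ) : ZMod P.d₁))^2 + (P.χ₂ ((p:ℕ) : ZMod P.d₂))^2)/8
          + (P.χ₁ ((p:ℕ) : ZMod P.d₁)) * (P.χ₂ ((p:ℕ) : ZMod P.d₂))/4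
        = -((P.χ₂ ((p:ℕ) : ZMod P.d₂))^2 + (P.χ₁ ((p:ℕ) : ZMod P.d₁))^2)/8
          + (P.χ₂ ((p:ℕ) : ZMod P.d₂)) * (P.χ₁ ((p:ℕ) : ZMod P.d₁))/4
      ring
    rcases fin2_cases l with rfl | rfl
    · constructor
      · intro hD
        have hB := bound_ndvd_odd P hd1' hd2' hr1 hr2 p hp hp3 hD z hz (α p) (α (p^2)) hA2 hA4
        rw [pow_one] at hB
        rw [hKl0]
        exact hB
      · intro hD
        obtain ⟨hB2, hB4⟩ := bound_dvd P hd1' hd2' hco hr1 hr2 p hp hD z hz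
          (α p) (α (p^2)) hA2 hA4
        rw [pow_one] at hB2
        rw [hKl0]
        have t1 : ‖(α p * P.KllS p z)‖/(p:ℝ) ≤ (1/2)/3 :=
          div_le_div₀ (by norm_num) hB2 (by norm_num) hp3'
        have t2 : ‖(α (p^2) * P.KllS (p^2) z)‖/(p:ℝ)^2 ≤ (1/8)/9 :=
          div_le_div₀ (by norm_num) hB4 (by norm_num) h9
        linarith
    · constructor
      · intro hD
        have hDs : ¬ p ∣ P.swap.D := by rwa [hsD]
        have hB := bound_ndvd_odd P.swap hs1' hs2' hsr1 hsr2 p hp hp3 hDs z hz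
          (α p) (α (p^2)) hA2s hA4s
        rw [pow_one] at hB
        rw [hKl1]
        exact hB
      · intro hD
        have hDs : p ∣ P.swap.D := by rwa [hsD]
        obtain ⟨hB2, hB4⟩ := bound_dvd P.swap hs1' hs2' hscop hsr1 hsr2 p hp hDs z hz
          (α p) (α (p^2)) hA2s hA4s
        rw [pow_one] at hB2
        rw [hKl1]
        have t1 : ‖(α p * P.swap.KllS p z)‖/(p:ℝ) ≤ (1/2)/3 :=
          div_le_div₀ (by norm_num) hB2 (by norm_num) hp3'
        have t2 : ‖(α (p^2) * P.swap.KllS (p^2) z)‖/(p:ℝ)^2 ≤ (1/8)/9 :=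
          div_le_div₀ (by norm_num) hB4 (by norm_num) h9
        linarith

end EpsteinPaper
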